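/- For every infinite sequence (w_i)_{i ∈ ℕ} of words over a finite alphabet Σ, there exist indices l and k with l < k such that w_l is a (not necessarily contiguous) subsequence of w_k. -/

import Mathlib

/-- **Higman's Lemma.** For every infinite sequence of words over a finite alphabet,
there exist indices `l < k` such that the `l`-th word is a (scattered) subsequence
of the `k`-th word. -/
theorem higman_lemma (A : Type) [Fintype A] (w : ℕ → List A) :
    ∃ l k : ℕ, l < k ∧ (w l).Sublist (w k) := by
  have hs : (Set.univ : Set A).PartiallyWellOrderedOn (· = ·) :=
    Set.Finite.partiallyWellOrderedOn Set.finite_univ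
  obtain ⟨l, k, hlk, h⟩ :=
    (hs.partiallyWellOrderedOn_sublistForall₂ (· = ·)).exists_lt (f := w) (fun n => by simp)
  obtain ⟨l', h1, h2⟩ := List.sublistForall₂_iff.mp h
  rw [List.forall₂_eq_eq_eq] at h1
  exact ⟨l, k, hlk, h1 ▸ h2⟩
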